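/- Let f : Fin M → ℝ^N with indices partitioned into K pairwise disjoint pools I_1, …, I_K, and let P₂ : ℝ^N → ℝ^K be the ℓ² pooling operator (P₂ x)_k = (∑_{j∈I_k} ⟨x, f_j⟩²)^{1/2}. Then for all x, x' ∈ ℝ^N, ‖P₂(x) − P₂(x')‖₂ ≤ λ₊(F) · d(x,x'), where λ₊(F) is the upper frame bound of f and d(x,x') = min(‖x − x'‖, ‖x + x'‖). -/

import Mathlib

open scoped BigOperators RealInnerProductSpace
open Finset

noncomputable section

/-- Upper frame bound of the family `f`. -/
def upperFrameBound {N M : ℕ} (f : Fin M → EuclideanSpace ℝ (Fin N)) : ℝ :=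
  sInf {C : ℝ | 0 ≤ C ∧ ∀ x : EuclideanSpace ℝ (Fin N),
    Real.sqrt (∑ i, ⟪x, f i⟫ ^ 2) ≤ C * ‖x‖}

/-- Sign-invariant distance `d(x,x') = min(‖x−x'‖, ‖x+x'‖)`. -/
def sdist {N : ℕ} (x x' : EuclideanSpace ℝ (Fin N)) : ℝ :=
  min ‖x - x'‖ ‖x + x'‖

/-- The ℓ² pooling operator: `(P₂ x)_k = (∑_{j∈I_k} ⟨x, f_j⟩²)^{1/2}`. -/
def pool2 {N M K : ℕ} (f : Fin M → EuclideanSpace ℝ (Fin N))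
    (I : Fin K → Finset (Fin M)) (x : EuclideanSpace ℝ (Fin N)) : Fin K → ℝ :=
  fun k => Real.sqrt (∑ j ∈ I k, ⟪x, f j⟫ ^ 2)

lemma upperFrameBound_mem {N M : ℕ} (f : Fin M → EuclideanSpace ℝ (Fin N)) :
    0 ≤ upperFrameBound f ∧ ∀ x : EuclideanSpace ℝ (Fin N),
      Real.sqrt (∑ i, ⟪x, f i⟫ ^ 2) ≤ upperFrameBound f * ‖x‖ := by
  set S : Set ℝ := {C : ℝ | 0 ≤ C ∧ ∀ x : EuclideanSpace ℝ (Fin N),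
    Real.sqrt (∑ i, ⟪x, f i⟫ ^ 2) ≤ C * ‖x‖} with hS
  have hclosed : IsClosed S := by
    have : S = {C : ℝ | 0 ≤ C} ∩ ⋂ x : EuclideanSpace ℝ (Fin N),
        {C : ℝ | Real.sqrt (∑ i, ⟪x, f i⟫ ^ 2) ≤ C * ‖x‖} := by
      ext C; simp [hS, Set.mem_iInter]
    rw [this]
    exact (isClosed_le continuous_const continuous_id).inter
      (isClosed_iInter fun x =>
        isClosed_le continuous_const (continuous_id.mul continuous_const))
  have hne : S.Nonempty := by
    refine ⟨Real.sqrt (∑ i, ‖f i‖ ^ 2), Real.sqrt_nonneg _, fun x => ?_⟩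
    have h1 : ∑ i, ⟪x, f i⟫ ^ 2 ≤ ∑ i, ‖x‖ ^ 2 * ‖f i‖ ^ 2 := by
      refine Finset.sum_le_sum fun i _ => ?_
      have := abs_real_inner_le_norm x (f i)
      calc ⟪x, f i⟫ ^ 2 = |⟪x, f i⟫| ^ 2 := (sq_abs _).symm
        _ ≤ (‖x‖ * ‖f i‖) ^ 2 := by
            apply pow_le_pow_left₀ (abs_nonneg _) this
        _ = ‖x‖ ^ 2 * ‖f i‖ ^ 2 := by ring
    calc Real.sqrt (∑ i, ⟪x, f i⟫ ^ 2)
        ≤ Real.sqrt (∑ i, ‖x‖ ^ 2 * ‖f i‖ ^ 2) := Real.sqrt_le_sqrt h1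
      _ = Real.sqrt (‖x‖ ^ 2 * ∑ i, ‖f i‖ ^ 2) := by rw [Finset.mul_sum]
      _ = ‖x‖ * Real.sqrt (∑ i, ‖f i‖ ^ 2) := by
          rw [Real.sqrt_mul (sq_nonneg _), Real.sqrt_sq (norm_nonneg _)]
      _ = Real.sqrt (∑ i, ‖f i‖ ^ 2) * ‖x‖ := mul_comm _ _
  have hbdd : BddBelow S := ⟨0, fun C hC => hC.1⟩
  have : sInf S ∈ S := hclosed.csInf_mem hne hbdd
  exact this

lemma pool2_diff_sq_le {N M K : ℕ} (f : Fin M → EuclideanSpace ℝ (Fin N))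
    (I : Fin K → Finset (Fin M)) (x x' : EuclideanSpace ℝ (Fin N)) (k : Fin K) :
    (pool2 f I x k - pool2 f I x' k) ^ 2 ≤ ∑ j ∈ I k, ⟪x - x', f j⟫ ^ 2 := by
  set u : EuclideanSpace ℝ (↥(I k)) := WithLp.toLp 2 (fun j : ↥(I k) => ⟪x, f j⟫) with hu
  set v : EuclideanSpace ℝ (↥(I k)) := WithLp.toLp 2 (fun j : ↥(I k) => ⟪x', f j⟫) with hv
  have hnorm : ∀ w : EuclideanSpace ℝ (↥(I k)),
      ‖w‖ = Real.sqrt (∑ j : ↥(I k), (w j) ^ 2) := by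
    intro w
    rw [EuclideanSpace.norm_eq]
    congr 1
    exact Finset.sum_congr rfl fun j _ => by rw [Real.norm_eq_abs, sq_abs]
  have hU : ‖u‖ = pool2 f I x k := by
    rw [hnorm, pool2]
    congr 1
    exact Finset.sum_coe_sort (I k) (fun j => ⟪x, f j⟫ ^ 2)
  have hV : ‖v‖ = pool2 f I x' k := by
    rw [hnorm, pool2]
    congr 1
    exact Finset.sum_coe_sort (I k) (fun j => ⟪x', f j⟫ ^ 2)
  have hUV : ‖u - v‖ ^ 2 = ∑ j ∈ I k, ⟪x - x', f j⟫ ^ 2 := by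
    rw [hnorm]
    rw [Real.sq_sqrt (Finset.sum_nonneg fun j _ => sq_nonneg _)]
    rw [← Finset.sum_coe_sort (I k) (fun j => ⟪x - x', f j⟫ ^ 2)]
    refine Finset.sum_congr rfl fun j _ => ?_
    have : (u - v) j = ⟪x - x', f (j : Fin M)⟫ := by
      simp [hu, hv, inner_sub_left]
    rw [this]
  have htri : |‖u‖ - ‖v‖| ≤ ‖u - v‖ := abs_norm_sub_norm_le u v
  calc (pool2 f I x k - pool2 f I x' k) ^ 2
      = |‖u‖ - ‖v‖| ^ 2 := by rw [hU, hV, sq_abs]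
    _ ≤ ‖u - v‖ ^ 2 := pow_le_pow_left₀ (abs_nonneg _) htri 2
    _ = ∑ j ∈ I k, ⟪x - x', f j⟫ ^ 2 := hUV

lemma pool2_diff_le {N M K : ℕ} (f : Fin M → EuclideanSpace ℝ (Fin N))
    (I : Fin K → Finset (Fin M))
    (hdisj : ∀ k k', k ≠ k' → Disjoint (I k) (I k'))
    (hcover : ∀ j : Fin M, ∃ k, j ∈ I k)
    (x x' : EuclideanSpace ℝ (Fin N)) :
    Real.sqrt (∑ k, (pool2 f I x k - pool2 f I x' k) ^ 2)
      ≤ upperFrameBound f * ‖x - x'‖ := by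
  obtain ⟨-, hber⟩ := upperFrameBound_mem f
  have hstep : ∑ k, (pool2 f I x k - pool2 f I x' k) ^ 2
      ≤ ∑ j, ⟪x - x', f j⟫ ^ 2 := by
    have h1 : ∑ k, (pool2 f I x k - pool2 f I x' k) ^ 2
        ≤ ∑ k, ∑ j ∈ I k, ⟪x - x', f j⟫ ^ 2 :=
      Finset.sum_le_sum fun k _ => pool2_diff_sq_le f I x x' k
    have h2 : ∑ k, ∑ j ∈ I k, ⟪x - x', f j⟫ ^ 2
        = ∑ j ∈ Finset.univ.biUnion I, ⟪x - x', f j⟫ ^ 2 := by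
      rw [Finset.sum_biUnion]
      intro k _ k' _ hkk'
      exact hdisj k k' hkk'
    have h3 : Finset.univ.biUnion I = Finset.univ := by
      ext j
      simp only [Finset.mem_biUnion, Finset.mem_univ, true_and, iff_true]
      exact hcover j
    rw [h2, h3] at h1
    exact h1
  calc Real.sqrt (∑ k, (pool2 f I x k - pool2 f I x' k) ^ 2)
      ≤ Real.sqrt (∑ j, ⟪x - x', f j⟫ ^ 2) := Real.sqrt_le_sqrt hstep
    _ ≤ upperFrameBound f * ‖x - x'‖ := hber _

/-- upper Lipschitz bound `‖P₂(x) − P₂(x')‖₂ ≤ λ₊(F)·d(x,x')` for ℓ² pooling. -/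
theorem pool2_upper_lipschitz {N M K : ℕ} (f : Fin M → EuclideanSpace ℝ (Fin N))
    (I : Fin K → Finset (Fin M))
    (hdisj : ∀ k k', k ≠ k' → Disjoint (I k) (I k'))
    (hcover : ∀ j : Fin M, ∃ k, j ∈ I k) :
    ∀ x x' : EuclideanSpace ℝ (Fin N),
      Real.sqrt (∑ k, (pool2 f I x k - pool2 f I x' k) ^ 2)
        ≤ upperFrameBound f * sdist x x' := by
  intro x x'
  obtain ⟨hC0, -⟩ := upperFrameBound_mem f
  have h1 := pool2_diff_le f I hdisj hcover x x'
  have h2 := pool2_diff_le f I hdisj hcover x (-x')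
  have hpool : pool2 f I (-x') = pool2 f I x' := by
    funext k
    simp [pool2, inner_neg_left]
  rw [hpool, sub_neg_eq_add] at h2
  rw [sdist, mul_min_of_nonneg _ _ hC0]
  exact le_min h1 h2
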